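/- Let f : ℝⁿ → ℝ be the pointwise maximum of C¹ convex functions f₀,...,f_p, and A(x̄) = {i : fᵢ(x̄) = f(x̄)}. Then ∂f(x̄) = conv{∇fᵢ(x̄) : i ∈ A(x̄)}. If moreover the gradients {∇fᵢ(x̄) : i ∈ A(x̄)} are affinely independent and ḡ = Σ_{i∈A(x̄)} αᵢ∇fᵢ(x̄) with all αᵢ > 0 and Σαᵢ = 1, then the U-space {d : dᵀ(g−ḡ)=0 ∀ g ∈ ∂f(x̄)} equals the orthogonal complement of span{∇fᵢ(x̄) − ∇f_j(x̄) : i ∈ A(x̄)} for any fixed j ∈ A(x̄). -/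

import Mathlib

open scoped RealInnerProductSpace

/-- The convex subdifferential. -/
def subdiff {n : ℕ} (f : EuclideanSpace ℝ (Fin n) → ℝ) (x : EuclideanSpace ℝ (Fin n)) :
    Set (EuclideanSpace ℝ (Fin n)) :=
  {g | ∀ y, f x + ⟪g, y - x⟫ ≤ f y}

section Aux
open Filter Set Topology

lemma convex_grad_ineq {n : ℕ} {f : EuclideanSpace ℝ (Fin n) → ℝ}
    (hc : ConvexOn ℝ Set.univ f) (hd : Differentiable ℝ f)
    (x y : EuclideanSpace ℝ (Fin n)) :
    f x + ⟪gradient f x, y - x⟫ ≤ f y := by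
  set v := y - x with hv
  set g : ℝ → ℝ := fun t => f (x + t • v) with hgdef
  have hgc : ConvexOn ℝ Set.univ g := by
    have h := hc.comp_affineMap (AffineMap.lineMap x y)
    have : g = f ∘ (AffineMap.lineMap x y) := by
      funext t
      simp [hgdef, AffineMap.lineMap_apply, hv, add_comm]
    rw [this]
    simpa using h
  have h1 : HasDerivAt (fun t : ℝ => x + t • v) v 0 := by
    simpa using ((hasDerivAt_id (0:ℝ)).smul_const v).const_add x
  have h2 : HasFDerivAt f (InnerProductSpace.toDual ℝ _ (gradient f x)) (x + (0:ℝ) • v) := by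
    simpa using ((hd x).hasGradientAt).hasFDerivAt
  have h3 : HasDerivAt g ⟪gradient f x, v⟫ 0 := by
    have := h2.comp_hasDerivAt 0 h1
    rw [InnerProductSpace.toDual_apply_apply] at this
    exact this
  have h4 := hgc.le_slope_of_hasDerivAt (Set.mem_univ 0) (Set.mem_univ 1) zero_lt_one h3
  have h5 : slope g 0 1 = g 1 - g 0 := by simp [slope_def_field]
  have hg1 : g 1 = f y := by simp [hgdef, hv]
  have hg0 : g 0 = f x := by simp [hgdef]
  rw [h5, hg1, hg0] at h4
  linarith

lemma subdiff_convex {n : ℕ} (f : EuclideanSpace ℝ (Fin n) → ℝ) (x : EuclideanSpace ℝ (Fin n)) :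
    Convex ℝ {g : EuclideanSpace ℝ (Fin n) | ∀ y, f x + ⟪g, y - x⟫ ≤ f y} := by
  intro g1 hg1 g2 hg2 a b ha hb hab
  intro y
  have h1 := hg1 y
  have h2 := hg2 y
  have key : ⟪a • g1 + b • g2, y - x⟫ = a * ⟪g1, y - x⟫ + b * ⟪g2, y - x⟫ := by
    rw [inner_add_left, real_inner_smul_left, real_inner_smul_left]
  rw [key]
  calc f x + (a * ⟪g1, y - x⟫ + b * ⟪g2, y - x⟫)
      = a * (f x + ⟪g1, y - x⟫) + b * (f x + ⟪g2, y - x⟫) := by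
        linear_combination (-(f x)) * hab
    _ ≤ a * f y + b * f y :=
        add_le_add (mul_le_mul_of_nonneg_left h1 ha) (mul_le_mul_of_nonneg_left h2 hb)
    _ = f y := by linear_combination (f y) * hab

lemma part1 (n p : ℕ)
    (fs : Fin (p + 1) → EuclideanSpace ℝ (Fin n) → ℝ)
    (hconv : ∀ i, ConvexOn ℝ Set.univ (fs i))
    (hC1 : ∀ i, ContDiff ℝ 1 (fs i))
    (F : EuclideanSpace ℝ (Fin n) → ℝ)
    (hF : F = fun x => Finset.univ.sup' Finset.univ_nonempty fun i => fs i x)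
    (xbar : EuclideanSpace ℝ (Fin n)) :
    subdiff F xbar =
      convexHull ℝ {g | ∃ i, fs i xbar = F xbar ∧ g = gradient (fs i) xbar} := by
  have hdiff : ∀ i, Differentiable ℝ (fs i) := fun i => (hC1 i).differentiable one_ne_zero
  have hFx : ∀ z, F z = Finset.univ.sup' Finset.univ_nonempty (fun i => fs i z) := by
    intro z; rw [hF]
  have hle : ∀ i x, fs i x ≤ F x := by
    intro i x; rw [hFx]; exact Finset.le_sup' (f := fun i => fs i x) (Finset.mem_univ i)
  set K : Set (EuclideanSpace ℝ (Fin n)) :=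
    {g | ∃ i, fs i xbar = F xbar ∧ g = gradient (fs i) xbar} with hK
  have hKfin : K.Finite := by
    apply (Set.finite_range (fun i => gradient (fs i) xbar)).subset
    rintro g ⟨i, -, rfl⟩; exact ⟨i, rfl⟩
  apply Set.Subset.antisymm
  · -- hard direction
    intro g hg
    by_contra hgK
    obtain ⟨fl, u, hsep, hgu⟩ :=
      geometric_hahn_banach_closed_point (convex_convexHull ℝ K)
        (hKfin.isCompact_convexHull ℝ).isClosed hgK
    set d : EuclideanSpace ℝ (Fin n) := (InnerProductSpace.toDual ℝ _).symm fl with hd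
    have hdip : ∀ w, ⟪d, w⟫ = fl w := fun w => InnerProductSpace.toDual_symm_apply
    set c : ℝ := fl g with hc
    -- for each i, eventually fs i (xbar + t • d) < F xbar + t * c
    have hev : ∀ i : Fin (p+1), ∀ᶠ t in 𝓝[>] (0:ℝ),
        fs i (xbar + t • d) < F xbar + t * c := by
      intro i
      by_cases hact : fs i xbar = F xbar
      · -- active
        have hgrad : fl (gradient (fs i) xbar) < u :=
          hsep _ (subset_convexHull ℝ K ⟨i, hact, rfl⟩)
        have hlt : ⟪gradient (fs i) xbar, d⟫ < c := by
          rw [real_inner_comm, hdip]; linarith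
        have h1 : HasDerivAt (fun t : ℝ => xbar + t • d) d 0 := by
          simpa using ((hasDerivAt_id (0:ℝ)).smul_const d).const_add xbar
        have h2 : HasFDerivAt (fs i)
            (InnerProductSpace.toDual ℝ _ (gradient (fs i) xbar)) (xbar + (0:ℝ) • d) := by
          simpa using ((hdiff i xbar).hasGradientAt).hasFDerivAt
        have h3 : HasDerivAt (fun t : ℝ => fs i (xbar + t • d))
            ⟪gradient (fs i) xbar, d⟫ 0 := by
          have := h2.comp_hasDerivAt 0 h1
          rw [InnerProductSpace.toDual_apply_apply] at this
          exact this
        have h4 := hasDerivAt_iff_tendsto_slope.mp h3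
        have h5 : Tendsto (slope (fun t : ℝ => fs i (xbar + t • d)) 0) (𝓝[>] (0:ℝ))
            (𝓝 ⟪gradient (fs i) xbar, d⟫) :=
          h4.mono_left (nhdsWithin_mono 0 (fun x hx => ne_of_gt hx))
        have h6 : ∀ᶠ t in 𝓝[>] (0:ℝ),
            slope (fun t : ℝ => fs i (xbar + t • d)) 0 t < c :=
          h5.eventually_lt_const hlt
        filter_upwards [h6, self_mem_nhdsWithin] with t h6t (ht : 0 < t)
        rw [slope_def_field] at h6t
        have := (div_lt_iff₀ ht).mp (by simpa using h6t)
        rw [← hact]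
        linarith
      · -- inactive
        have hlt : fs i xbar < F xbar := lt_of_le_of_ne (hle i xbar) hact
        have hcont : Tendsto (fun t : ℝ => fs i (xbar + t • d)) (𝓝[>] (0:ℝ))
            (𝓝 (fs i xbar)) := by
          have : ContinuousAt (fun t : ℝ => fs i (xbar + t • d)) 0 := by
            apply ((hC1 i).continuous.comp (by continuity)).continuousAt
          simpa using this.continuousWithinAt.tendsto
        have hrhs : Tendsto (fun t : ℝ => F xbar + t * c) (𝓝[>] (0:ℝ)) (𝓝 (F xbar)) := by
          have hco : ContinuousAt (fun t : ℝ => F xbar + t * c) 0 :=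
            (continuous_const.add (continuous_id.mul continuous_const)).continuousAt
          have h := hco.continuousWithinAt.tendsto (s := Ioi (0:ℝ))
          simpa using h
        exact hcont.eventually_lt hrhs hlt
    have hall : ∀ᶠ t in 𝓝[>] (0:ℝ), ∀ i, fs i (xbar + t • d) < F xbar + t * c :=
      eventually_all.mpr hev
    obtain ⟨t, ht, htpos⟩ := (hall.and self_mem_nhdsWithin).exists
    have hFt : F (xbar + t • d) < F xbar + t * c := by
      rw [hFx (xbar + t • d)]
      exact (Finset.sup'_lt_iff Finset.univ_nonempty).mpr (fun i _ => ht i)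
    have hsub := hg (xbar + t • d)
    have hinner : ⟪g, (xbar + t • d) - xbar⟫ = t * c := by
      rw [add_sub_cancel_left, real_inner_smul_right, real_inner_comm, hdip]
    rw [hinner] at hsub
    linarith
  · -- easy direction
    apply convexHull_min
    · rintro g ⟨i, hact, rfl⟩
      intro y
      calc F xbar + ⟪gradient (fs i) xbar, y - xbar⟫
          = fs i xbar + ⟪gradient (fs i) xbar, y - xbar⟫ := by rw [hact]
        _ ≤ fs i y := convex_grad_ineq (hconv i) (hdiff i) xbar y
        _ ≤ F y := hle i y
    · exact subdiff_convex F xbar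

end Aux

open Classical in
theorem finite_max_subdiff_and_U_space (n p : ℕ)
    (fs : Fin (p + 1) → EuclideanSpace ℝ (Fin n) → ℝ)
    (hconv : ∀ i, ConvexOn ℝ Set.univ (fs i))
    (hC1 : ∀ i, ContDiff ℝ 1 (fs i))
    (F : EuclideanSpace ℝ (Fin n) → ℝ)
    (hF : F = fun x => Finset.univ.sup' Finset.univ_nonempty fun i => fs i x)
    (xbar : EuclideanSpace ℝ (Fin n)) :
    subdiff F xbar =
      convexHull ℝ {g | ∃ i, fs i xbar = F xbar ∧ g = gradient (fs i) xbar} ∧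
    ∀ j, fs j xbar = F xbar →
      LinearIndependent ℝ (fun i : {i // fs i xbar = F xbar ∧ i ≠ j} =>
        gradient (fs i.1) xbar - gradient (fs j) xbar) →
      ∀ α : Fin (p + 1) → ℝ,
        (∀ i, fs i xbar = F xbar → 0 < α i) →
        (∑ i ∈ Finset.univ.filter (fun i => fs i xbar = F xbar), α i) = 1 →
        ∀ gbar : EuclideanSpace ℝ (Fin n),
          gbar = ∑ i ∈ Finset.univ.filter (fun i => fs i xbar = F xbar),
            α i • gradient (fs i) xbar →
          {d : EuclideanSpace ℝ (Fin n) | ∀ g ∈ subdiff F xbar, ⟪d, g - gbar⟫ = 0} =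
            ↑(Submodule.span ℝ
              {w : EuclideanSpace ℝ (Fin n) | ∃ i, fs i xbar = F xbar ∧
                w = gradient (fs i) xbar - gradient (fs j) xbar})ᗮ := by

  have hpart1 := part1 n p fs hconv hC1 F hF xbar
  refine ⟨hpart1, ?_⟩
  intro j hj hli α hαpos hαsum gbar hgbar
  clear hli hαpos
  set A := Finset.univ.filter (fun i : Fin (p+1) => fs i xbar = F xbar) with hA
  set S : Set (EuclideanSpace ℝ (Fin n)) :=
    {w | ∃ i, fs i xbar = F xbar ∧ w = gradient (fs i) xbar - gradient (fs j) xbar} with hS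
  set M := Submodule.span ℝ S with hM
  -- gbar - ∇f_j ∈ M
  have hgbarM : gbar - gradient (fs j) xbar ∈ M := by
    have heq : gbar - gradient (fs j) xbar =
        ∑ i ∈ A, α i • (gradient (fs i) xbar - gradient (fs j) xbar) := by
      rw [hgbar]
      simp only [smul_sub]
      rw [Finset.sum_sub_distrib, ← Finset.sum_smul, hαsum, one_smul]
    rw [heq]
    refine Submodule.sum_mem M ?_
    intro i hi
    have hact : fs i xbar = F xbar := (Finset.mem_filter.mp hi).2
    exact M.smul_mem _ (Submodule.subset_span ⟨i, hact, rfl⟩)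
  -- for active i, ∇f_i - gbar ∈ M
  have hgenM : ∀ i : Fin (p+1), fs i xbar = F xbar →
      gradient (fs i) xbar - gbar ∈ M := by
    intro i hact
    have h1 : gradient (fs i) xbar - gradient (fs j) xbar ∈ M :=
      Submodule.subset_span ⟨i, hact, rfl⟩
    have : gradient (fs i) xbar - gbar =
        (gradient (fs i) xbar - gradient (fs j) xbar) - (gbar - gradient (fs j) xbar) := by
      abel
    rw [this]
    exact M.sub_mem h1 hgbarM
  ext d
  simp only [Set.mem_setOf_eq, SetLike.mem_coe]
  constructor
  · -- LHS ⊆ Mᗮ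
    intro hd
    rw [Submodule.mem_orthogonal]
    have hgen : ∀ i : Fin (p+1), fs i xbar = F xbar → ⟪d, gradient (fs i) xbar - gbar⟫ = 0 := by
      intro i hact
      apply hd
      rw [hpart1]
      exact subset_convexHull ℝ _ ⟨i, hact, rfl⟩
    have hgenS : ∀ w ∈ S, ⟪w, d⟫ = 0 := by
      rintro w ⟨i, hact, rfl⟩
      have h1 := hgen i hact
      have h2 := hgen j hj
      rw [real_inner_comm]
      have : gradient (fs i) xbar - gradient (fs j) xbar =
          (gradient (fs i) xbar - gbar) - (gradient (fs j) xbar - gbar) := by abel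
      rw [this, inner_sub_right, h1, h2, sub_zero]
    intro u hu
    induction hu using Submodule.span_induction with
    | mem w hw => exact hgenS w hw
    | zero => simp
    | add u v _ _ hu hv => rw [inner_add_left, hu, hv, add_zero]
    | smul a u _ hu => rw [real_inner_smul_left, hu, mul_zero]
  · -- Mᗮ ⊆ LHS
    intro hd g hg
    have hdM : ∀ u ∈ M, ⟪d, u⟫ = 0 := by
      intro u hu
      rw [real_inner_comm]
      exact (Submodule.mem_orthogonal M d).mp hd u hu
    rw [hpart1] at hg
    have hC : (convexHull ℝ {g | ∃ i, fs i xbar = F xbar ∧ g = gradient (fs i) xbar}) ⊆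
        {g : EuclideanSpace ℝ (Fin n) | ⟪d, g - gbar⟫ = 0} := by
      apply convexHull_min
      · rintro w ⟨i, hact, rfl⟩
        exact hdM _ (hgenM i hact)
      · intro g1 hg1 g2 hg2 a b ha hb hab
        simp only [Set.mem_setOf_eq] at hg1 hg2 ⊢
        have hgb : gbar = a • gbar + b • gbar := by rw [← add_smul, hab, one_smul]
        have : (a • g1 + b • g2 : EuclideanSpace ℝ (Fin n)) - gbar =
            a • (g1 - gbar) + b • (g2 - gbar) := by
          rw [smul_sub, smul_sub]
          nth_rewrite 1 [hgb]
          abel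
        rw [this, inner_add_right, real_inner_smul_right, real_inner_smul_right, hg1, hg2]
        ring
    exact hC hg
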